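/- Suppose 𝒜 = {0, 1, …, p} ∪ {q₁, …, q_l} ∪ {α}, where 1 ≤ p < q₁ < ⋯ < q_l = α − 1 and p ≥ α − q₁. Then r(𝒜) = reg(𝒜), where r(𝒜) := min{r ∈ ℕ : (r+1)𝒜 = {0, α} + r𝒜} and reg(𝒜) := min{m ≥ 1 : m𝒜 is full}. -/

import Mathlib

open scoped Pointwise

/-- The `m`-fold sumset of a finite set `A ⊆ ℕ`, with `0 • A = {0}`. -/
def sumset (A : Finset ℕ) : ℕ → Finset ℕ
  | 0 => {0}
  | m + 1 => sumset A m + A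

/-- A subset of `ℕ` is full iff it equals `{0, 1, …, n}` for some `n`. -/
def IsFull (B : Finset ℕ) : Prop := ∃ n : ℕ, B = Finset.Iic n

/-- `{i, …, j}` is a gap of `B`: disjoint from `B`, with `i - 1 ∈ B` and `j + 1 ∈ B`. -/
def IsGap (B : Finset ℕ) (i j : ℕ) : Prop :=
  1 ≤ i ∧ i ≤ j ∧ (∀ k, i ≤ k → k ≤ j → k ∉ B) ∧ i - 1 ∈ B ∧ j + 1 ∈ B

/-- `λ(B)`: the maximal length of a gap of `B` (`0` if there are no gaps). -/
noncomputable def gapLen (B : Finset ℕ) : ℕ :=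
  sSup {n | ∃ i j, IsGap B i j ∧ n = j - i + 1}

/-- Property `(P₁)`. -/
def P1 (A : Finset ℕ) (α : ℕ) : Prop :=
  ∀ m : ℕ, ¬ IsFull (sumset A m) → ¬ IsFull (sumset A m + ({0, α} : Finset ℕ))

/-- Property `(P₂)`. -/
def P2 (A : Finset ℕ) (α : ℕ) : Prop :=
  ∀ m : ℕ, ¬ IsFull (sumset A m) →
    ¬ ((∀ k, k ≤ α → k ∈ sumset A m) ∧
       (∀ k, (m - 1) * α ≤ k → k ≤ m * α → k ∈ sumset A m))

/-- The combinatorial reduction number `r(𝒜)`. -/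
noncomputable def rA (A : Finset ℕ) (α : ℕ) : ℕ :=
  sInf {r : ℕ | sumset A (r + 1) = ({0, α} : Finset ℕ) + sumset A r}

/-- The combinatorial regularity `reg(𝒜)`. -/
noncomputable def regA (A : Finset ℕ) : ℕ :=
  sInf {m : ℕ | 1 ≤ m ∧ IsFull (sumset A m)}

/-! ### Auxiliary lemmas -/

lemma sumset_succ (A : Finset ℕ) (m : ℕ) : sumset A (m + 1) = sumset A m + A := rfl

lemma zero_mem_sumset {A : Finset ℕ} (h0 : (0:ℕ) ∈ A) : ∀ m, 0 ∈ sumset A m := by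
  intro m
  induction m with
  | zero => simp [sumset]
  | succ m ih =>
    have := Finset.add_mem_add ih h0
    exact this

lemma mem_sumset_add {A : Finset ℕ} {m : ℕ} {x : ℕ} (hx : x ∈ sumset A m) :
    ∀ {n y}, y ∈ sumset A n → x + y ∈ sumset A (m + n) := by
  intro n
  induction n with
  | zero =>
    intro y hy
    simp [sumset] at hy
    subst hy
    simpa using hx
  | succ n ih =>
    intro y hy
    obtain ⟨w, hw, a, ha, rfl⟩ := Finset.mem_add.mp hy
    have h := Finset.add_mem_add (ih hw) ha
    have e : x + (w + a) = x + w + a := by ring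
    rw [e]
    exact h

lemma sumset_le {A : Finset ℕ} {α : ℕ} (hb : ∀ a ∈ A, a ≤ α) :
    ∀ {m x}, x ∈ sumset A m → x ≤ m * α := by
  intro m
  induction m with
  | zero => intro x hx; simp [sumset] at hx; omega
  | succ m ih =>
    intro x hx
    obtain ⟨w, hw, a, ha, rfl⟩ := Finset.mem_add.mp hx
    have h1 := ih hw
    have h2 := hb a ha
    have h3 : (m+1)*α = m*α + α := Nat.succ_mul m α
    omega

lemma mem_sumset_of_le_mul {A : Finset ℕ} {p : ℕ} (hIic : ∀ b ≤ p, b ∈ A) :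
    ∀ k b, b ≤ k * p → b ∈ sumset A k := by
  intro k
  induction k with
  | zero => intro b hb; simp at hb; simp [sumset, hb]
  | succ k ih =>
    intro b hb
    have hsucc : (k+1)*p = k*p + p := Nat.succ_mul k p
    rcases le_or_gt b p with h | h
    · have h0 : (0:ℕ) ∈ sumset A k := ih 0 (Nat.zero_le _)
      have := Finset.add_mem_add h0 (hIic b h)
      simpa [sumset_succ] using this
    · have hb' : b - p ≤ k*p := by omega
      have hmem := Finset.add_mem_add (ih (b - p) hb') (hIic p le_rfl)
      have e : b - p + p = b := by omega
      rw [e] at hmem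
      exact hmem

lemma mul_mem_sumset {A : Finset ℕ} {α : ℕ} (hα : α ∈ A) : ∀ j, j * α ∈ sumset A j := by
  intro j
  induction j with
  | zero => simp [sumset]
  | succ j ih =>
    have h := Finset.add_mem_add ih hα
    have e : (j+1)*α = j*α + α := Nat.succ_mul j α
    rw [e]
    exact h

lemma top_mem_sumset {A : Finset ℕ} {α : ℕ} (hα : α ∈ A) (hα1 : α - 1 ∈ A) (hαpos : 1 ≤ α) :
    ∀ m i, i ≤ m → m * α - i ∈ sumset A m := by
  intro m
  induction m with
  | zero =>
    intro i hi
    interval_cases i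
    simp [sumset]
  | succ m ih =>
    intro i hi
    have hm : m ≤ m * α := Nat.le_mul_of_pos_right m (by omega)
    have hsucc : (m+1)*α = m*α + α := Nat.succ_mul m α
    rcases le_or_gt i m with h | h
    · have hmem := Finset.add_mem_add (ih i h) hα
      have e : m*α - i + α = (m+1)*α - i := by omega
      rw [e] at hmem
      exact hmem
    · have hi' : i = m + 1 := by omega
      subst hi'
      have hmem := Finset.add_mem_add (ih m le_rfl) hα1
      have e : m*α - m + (α - 1) = (m+1)*α - (m+1) := by omega
      rw [e] at hmem
      exact hmem

lemma exists_block {α : ℕ} : ∀ m y : ℕ, 1 ≤ y → y ≤ m * α →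
    ∃ j, 1 ≤ j ∧ j ≤ m ∧ (j-1)*α < y ∧ y ≤ j*α := by
  intro m
  induction m with
  | zero => intro y h1 h2; simp at h2; omega
  | succ m ih =>
    intro y h1 h2
    rcases le_or_gt y (m*α) with h | h
    · obtain ⟨j, hj1, hj2, hj3, hj4⟩ := ih y h1 h
      exact ⟨j, hj1, by omega, hj3, hj4⟩
    · refine ⟨m+1, by omega, le_rfl, ?_, h2⟩
      simpa using h

/-- Key lemma: an element of `m𝒜` exceeding `(m-1)α + p` is a sum of `m` "top"
elements (each `≥ q1`), so subtracting `k` copies of `q1` stays in `m𝒜`. -/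
lemma key (𝒜 : Finset ℕ) (p α q1 : ℕ) (hp : 1 ≤ p)
    (hq1α : q1 ≤ α) (hD : α - q1 ≤ p)
    (hIic : ∀ b, b ≤ p → b ∈ 𝒜)
    (hbound : ∀ a ∈ 𝒜, a ≤ α)
    (htop : ∀ a ∈ 𝒜, p < a → q1 ≤ a) :
    ∀ m k x, k ≤ m → x ∈ sumset 𝒜 m → (m-1)*α + p < x →
      k*q1 ≤ x ∧ x - k*q1 ∈ sumset 𝒜 m := by
  intro m
  induction m with
  | zero =>
    intro k x hk hx hgt
    simp [sumset] at hx
    omega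
  | succ m ih =>
    intro k x hk hx hgt
    obtain ⟨w, hw, a, ha, rfl⟩ := Finset.mem_add.mp hx
    have hwle : w ≤ m*α := sumset_le hbound hw
    have haα : a ≤ α := hbound a ha
    have hgt' : m*α + p < w + a := by simpa using hgt
    have hpa : p < a := by omega
    have haq : q1 ≤ a := htop a ha hpa
    rcases k with _ | k'
    · refine ⟨by simp, ?_⟩
      simpa [sumset_succ] using Finset.add_mem_add hw ha
    · have hsm : (k'+1)*q1 = k'*q1 + q1 := Nat.succ_mul k' q1
      rcases Nat.eq_zero_or_pos k' with rfl | hk'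
      · have hz : (0:ℕ)*q1 = 0 := by simp
        refine ⟨by omega, ?_⟩
        have e : w + a - (0+1)*q1 = w + (a - q1) := by omega
        rw [e]
        exact Finset.add_mem_add hw (hIic _ (by omega))
      · have hm1 : 1 ≤ m := by omega
        have e3 : (m-1)*α + α = m*α := by
          have h' : (m-1)+1 = m := by omega
          calc (m-1)*α + α = ((m-1)+1)*α := (Nat.succ_mul _ _).symm
            _ = m*α := by rw [h']
        have hgtw : (m-1)*α + p < w := by omega
        obtain ⟨h1, h2⟩ := ih k' w (by omega) hw hgtw
        refine ⟨by omega, ?_⟩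
        have e : w + a - (k'+1)*q1 = (w - k'*q1) + (a - q1) := by omega
        rw [e]
        exact Finset.add_mem_add h2 (hIic _ (by omega))

/-- If the top interval `[(m-1)α, mα]` lies in `m𝒜`, then `m𝒜` is full. -/
lemma full_of_top (𝒜 : Finset ℕ) (p α q1 : ℕ)
    (hp : 1 ≤ p) (hq1α : q1 + 1 ≤ α)
    (hD : α - q1 ≤ p)
    (h0 : (0:ℕ) ∈ 𝒜) (hα : α ∈ 𝒜) (hIic : ∀ b, b ≤ p → b ∈ 𝒜)
    (hbound : ∀ a ∈ 𝒜, a ≤ α)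
    (htop : ∀ a ∈ 𝒜, p < a → q1 ≤ a)
    (m : ℕ) (hm : 1 ≤ m)
    (H : ∀ x, (m-1)*α ≤ x → x ≤ m*α → x ∈ sumset 𝒜 m) :
    sumset 𝒜 m = Finset.Iic (m*α) := by
  ext y
  simp only [Finset.mem_Iic]
  constructor
  · exact fun hy => sumset_le hbound hy
  · intro hy
    rcases Nat.eq_zero_or_pos y with rfl | hy1
    · exact zero_mem_sumset h0 m
    obtain ⟨j0, hj01, hj0m, hylow, hyhigh⟩ := exists_block m y hy1 hy
    set k := m - j0 with hk
    set v0 := j0*α - y with hv0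
    have e1 : k*α = k*q1 + k*(α - q1) := by
      rw [← Nat.mul_add, Nat.add_sub_cancel' (by omega : q1 ≤ α)]
    have e2 : j0*α + k*α = m*α := by
      rw [← Nat.add_mul]
      congr 1
      omega
    have e3 : (m-1)*α + α = m*α := by
      have h' : (m-1)+1 = m := by omega
      calc (m-1)*α + α = ((m-1)+1)*α := (Nat.succ_mul _ _).symm
        _ = m*α := by rw [h']
    have e4 : (j0-1)*α + α = j0*α := by
      have h' : (j0-1)+1 = j0 := by omega
      calc (j0-1)*α + α = ((j0-1)+1)*α := (Nat.succ_mul _ _).symm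
        _ = j0*α := by rw [h']
    have e5 : k*(α - q1) ≤ k*p := Nat.mul_le_mul_left k hD
    have hyv : y + v0 = j0*α := by omega
    by_cases hA : v0 + k*(α - q1) + p + 1 ≤ α
    · -- Case A: use the top interval and the key lemma
      have hxmem : y + k*q1 ∈ sumset 𝒜 m := by
        apply H <;> omega
      obtain ⟨h1, h2⟩ := key 𝒜 p α q1 hp (by omega) hD hIic hbound htop m k (y + k*q1)
        (by omega) hxmem (by omega)
      have e : y + k*q1 - k*q1 = y := by omega
      rwa [e] at h2
    · -- Case B: y is close above a multiple of α
      push_neg at hA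
      have hb1 : 1 ≤ y - (j0-1)*α := by omega
      have hb2 : y - (j0-1)*α ≤ (k+1)*p := by
        have hs : (k+1)*p = k*p + p := Nat.succ_mul k p
        omega
      have hmem := mem_sumset_add (mul_mem_sumset hα (j0-1))
        (mem_sumset_of_le_mul hIic (k+1) (y - (j0-1)*α) hb2)
      have eidx : (j0-1) + (k+1) = m := by omega
      rw [eidx] at hmem
      have e : (j0-1)*α + (y - (j0-1)*α) = y := by omega
      rwa [e] at hmem

lemma propagate (𝒜 : Finset ℕ) (α r : ℕ)
    (h : sumset 𝒜 (r+1) = ({0, α} : Finset ℕ) + sumset 𝒜 r) :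
    ∀ i, sumset 𝒜 (r + i + 1) = ({0, α} : Finset ℕ) + sumset 𝒜 (r + i) := by
  intro i
  induction i with
  | zero => exact h
  | succ i ih =>
    have h1 : sumset 𝒜 (r + (i+1) + 1) = sumset 𝒜 (r + i + 1) + 𝒜 := rfl
    rw [h1, ih, add_assoc]
    rfl

lemma full_step {A : Finset ℕ} {α : ℕ} (h0 : (0:ℕ) ∈ A) (hα : α ∈ A)
    (hb : ∀ a ∈ A, a ≤ α) {m : ℕ} (hm : 1 ≤ m)
    (h : sumset A m = Finset.Iic (m*α)) :
    sumset A (m+1) = Finset.Iic ((m+1)*α) := by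
  have hsucc : (m+1)*α = m*α + α := Nat.succ_mul m α
  have hαm : α ≤ m*α := Nat.le_mul_of_pos_left α (by omega)
  ext z
  simp only [Finset.mem_Iic]
  constructor
  · exact fun hz => sumset_le hb hz
  · intro hz
    rcases le_or_gt z (m*α) with h' | h'
    · have hzmem : z ∈ sumset A m := by rw [h]; simpa using h'
      have := Finset.add_mem_add hzmem h0
      simpa [sumset_succ] using this
    · have hzmem : z - α ∈ sumset A m := by
        rw [h]
        simp only [Finset.mem_Iic]
        omega
      have hmem := Finset.add_mem_add hzmem hα
      have e : z - α + α = z := by omega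
      rw [e] at hmem
      exact hmem

/-- If `𝒜 = {0,…,p} ∪ {q₁,…,q_l} ∪ {α}` with `1 ≤ p < q₁ < ⋯ < q_l = α − 1` and
`p ≥ α − q₁`, then `r(𝒜) = reg(𝒜)`. -/
theorem stmt_16 (𝒜 Q : Finset ℕ) (p α : ℕ) (hQne : Q.Nonempty)
    (h𝒜 : 𝒜 = Finset.Iic p ∪ Q ∪ {α})
    (hp : 1 ≤ p)
    (hQ : ∀ q ∈ Q, p < q ∧ q ≤ α)
    (hQmax : Q.max' hQne = α - 1)
    (hpq : α - Q.min' hQne ≤ p) :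
    rA 𝒜 α = regA 𝒜 := by
  set q1 := Q.min' hQne with hq1def
  have hq1Q : q1 ∈ Q := Q.min'_mem hQne
  have hq1 : p < q1 ∧ q1 ≤ α := hQ q1 hq1Q
  have hmaxQ : α - 1 ∈ Q := by rw [← hQmax]; exact Q.max'_mem hQne
  have hpα : p < α - 1 := (hQ _ hmaxQ).1
  have hα3 : p + 2 ≤ α := by omega
  have hq1le : q1 ≤ α - 1 := Q.min'_le _ hmaxQ
  have h0 : (0:ℕ) ∈ 𝒜 := by rw [h𝒜]; simp
  have hαmem : α ∈ 𝒜 := by rw [h𝒜]; simp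
  have hα1mem : α - 1 ∈ 𝒜 := by rw [h𝒜]; simp [hmaxQ]
  have hIic : ∀ b, b ≤ p → b ∈ 𝒜 := by
    intro b hb
    rw [h𝒜]
    simp [hb]
  have hbound : ∀ a ∈ 𝒜, a ≤ α := by
    intro a ha
    rw [h𝒜] at ha
    simp only [Finset.mem_union, Finset.mem_Iic, Finset.mem_singleton] at ha
    rcases ha with (h | h) | h
    · omega
    · exact (hQ a h).2
    · omega
  have htop : ∀ a ∈ 𝒜, p < a → q1 ≤ a := by
    intro a ha hpa
    rw [h𝒜] at ha
    simp only [Finset.mem_union, Finset.mem_Iic, Finset.mem_singleton] at ha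
    rcases ha with (h | h) | h
    · omega
    · exact Q.min'_le a h
    · omega
  -- fullness at m = α
  have hfullα : sumset 𝒜 α = Finset.Iic (α * α) := by
    apply full_of_top 𝒜 p α q1 hp (by omega) hpq h0 hαmem hIic hbound htop α (by omega)
    intro x hx1 hx2
    have hαle : α ≤ α*α := Nat.le_mul_of_pos_left α (by omega)
    have e3 : (α-1)*α + α = α*α := by
      have h' : (α-1)+1 = α := by omega
      calc (α-1)*α + α = ((α-1)+1)*α := (Nat.succ_mul _ _).symm
        _ = α*α := by rw [h']
    have hi : α*α - x ≤ α := by omega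
    have hmem := top_mem_sumset hαmem hα1mem (by omega) α (α*α - x) hi
    have e : α*α - (α*α - x) = x := by omega
    rwa [e] at hmem
  have hMne : {m : ℕ | 1 ≤ m ∧ IsFull (sumset 𝒜 m)}.Nonempty :=
    ⟨α, by omega, ⟨α*α, hfullα⟩⟩
  have hregmem : 1 ≤ regA 𝒜 ∧ IsFull (sumset 𝒜 (regA 𝒜)) := Nat.sInf_mem hMne
  obtain ⟨hreg1, n, hn⟩ := hregmem
  have hnval : n = regA 𝒜 * α := by
    have h1 : regA 𝒜 * α ∈ sumset 𝒜 (regA 𝒜) := mul_mem_sumset hαmem (regA 𝒜)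
    have h2 : regA 𝒜 * α ≤ n := by
      rw [hn] at h1
      simpa using h1
    have h3 : n ∈ sumset 𝒜 (regA 𝒜) := by rw [hn]; simp
    have h4 := sumset_le hbound h3
    omega
  have hfullreg : sumset 𝒜 (regA 𝒜) = Finset.Iic (regA 𝒜 * α) := by rw [hn, hnval]
  have hfullmono : ∀ i, sumset 𝒜 (regA 𝒜 + i) = Finset.Iic ((regA 𝒜 + i)*α) := by
    intro i
    induction i with
    | zero => simpa using hfullreg
    | succ i ih =>
      have h := full_step h0 hαmem hbound (by omega) ih
      have e : regA 𝒜 + (i+1) = (regA 𝒜 + i) + 1 := rfl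
      rw [e]
      exact h
  -- reg satisfies the reduction equation
  have hregR : sumset 𝒜 (regA 𝒜 + 1) = ({0, α} : Finset ℕ) + sumset 𝒜 (regA 𝒜) := by
    have hL := hfullmono 1
    rw [hL, hfullreg]
    have hsucc : (regA 𝒜 + 1)*α = regA 𝒜 * α + α := Nat.succ_mul (regA 𝒜) α
    have hαle : α ≤ regA 𝒜 * α := Nat.le_mul_of_pos_left α (by omega)
    ext z
    simp only [Finset.mem_Iic, Finset.mem_add, Finset.mem_insert, Finset.mem_singleton]
    constructor
    · intro hz
      rcases le_or_gt z (regA 𝒜 * α) with h' | h'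
      · exact ⟨0, Or.inl rfl, z, h', by omega⟩
      · exact ⟨α, Or.inr rfl, z - α, by omega, by omega⟩
    · rintro ⟨b, hb, c, hc, rfl⟩
      rcases hb with rfl | rfl <;> omega
  have hRA : rA 𝒜 α ≤ regA 𝒜 := Nat.sInf_le hregR
  -- now the reverse direction
  have hRne : {r' : ℕ | sumset 𝒜 (r' + 1) = ({0, α} : Finset ℕ) + sumset 𝒜 r'}.Nonempty :=
    ⟨regA 𝒜, hregR⟩
  have hr : sumset 𝒜 (rA 𝒜 α + 1) = ({0, α} : Finset ℕ) + sumset 𝒜 (rA 𝒜 α) :=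
    Nat.sInf_mem hRne
  set r := rA 𝒜 α with hrdef
  have hr1 : 1 ≤ r := by
    by_contra hcon
    have hr0 : r = 0 := by omega
    rw [hr0] at hr
    have h1mem : (1:ℕ) ∈ sumset 𝒜 1 := by
      have h := Finset.add_mem_add (show (0:ℕ) ∈ sumset 𝒜 0 by simp [sumset]) (hIic 1 hp)
      exact h
    rw [hr] at h1mem
    obtain ⟨b, hb, c, hc, hbc⟩ := Finset.mem_add.mp h1mem
    simp only [Finset.mem_insert, Finset.mem_singleton] at hb
    simp [sumset] at hc
    rcases hb with rfl | rfl <;> omega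
  have hdecomp : ∀ i x, x ∈ sumset 𝒜 (r + i) →
      ∃ kk, kk ≤ i ∧ kk*α ≤ x ∧ x - kk*α ∈ sumset 𝒜 r := by
    intro i
    induction i with
    | zero =>
      intro x hx
      exact ⟨0, le_rfl, by simp, by simpa using hx⟩
    | succ i ih =>
      intro x hx
      have hprop := propagate 𝒜 α r hr i
      have e : r + (i+1) = (r + i) + 1 := rfl
      rw [e, hprop] at hx
      obtain ⟨b, hb, w, hw, rfl⟩ := Finset.mem_add.mp hx
      obtain ⟨kk, hkk, hkk2, hkk3⟩ := ih w hw
      simp only [Finset.mem_insert, Finset.mem_singleton] at hb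
      rcases hb with rfl | hb'
      · exact ⟨kk, by omega, by simpa using hkk2, by simpa using hkk3⟩
      · refine ⟨kk + 1, by omega, ?_, ?_⟩
        · have hsm : (kk+1)*α = kk*α + α := Nat.succ_mul kk α
          omega
        · have hsm : (kk+1)*α = kk*α + α := Nat.succ_mul kk α
          have e2 : b + w - (kk+1)*α = w - kk*α := by omega
          rw [e2]
          exact hkk3
  have htopr : ∀ x, (r-1)*α ≤ x → x ≤ r*α → x ∈ sumset 𝒜 r := by
    intro x hx1 hx2
    have hfullS : sumset 𝒜 (r + regA 𝒜) = Finset.Iic ((r + regA 𝒜)*α) := by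
      have h := hfullmono r
      rwa [Nat.add_comm (regA 𝒜) r] at h
    have hdist : (r + regA 𝒜)*α = r*α + regA 𝒜 * α := Nat.add_mul r (regA 𝒜) α
    have hXmem : x + regA 𝒜 * α ∈ sumset 𝒜 (r + regA 𝒜) := by
      rw [hfullS]
      simp only [Finset.mem_Iic]
      omega
    obtain ⟨kk, hkk, hkk2, hkk3⟩ := hdecomp (regA 𝒜) (x + regA 𝒜 * α) hXmem
    have hwle : x + regA 𝒜 * α - kk*α ≤ r*α := sumset_le hbound hkk3
    rcases eq_or_lt_of_le hkk with rfl | hlt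
    · simpa using hkk3
    · have h1 : α ≤ (regA 𝒜 - kk)*α := Nat.le_mul_of_pos_left α (by omega)
      have h2 : kk*α + (regA 𝒜 - kk)*α = regA 𝒜 * α := by
        rw [← Nat.add_mul]
        congr 1
        omega
      have h3 : (r-1)*α + α = r*α := by
        have h' : (r-1)+1 = r := by omega
        calc (r-1)*α + α = ((r-1)+1)*α := (Nat.succ_mul _ _).symm
          _ = r*α := by rw [h']
      have hx0 : x = (r-1)*α := by omega
      have hmem := mem_sumset_add (mul_mem_sumset hαmem (r-1)) (zero_mem_sumset h0 1)
      have eidx : (r-1) + 1 = r := by omega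
      rw [eidx] at hmem
      simpa [hx0] using hmem
  have hfullr : sumset 𝒜 r = Finset.Iic (r*α) :=
    full_of_top 𝒜 p α q1 hp (by omega) hpq h0 hαmem hIic hbound htop r hr1 htopr
  have hRG : regA 𝒜 ≤ r := Nat.sInf_le ⟨hr1, r*α, hfullr⟩
  omega
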